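/- Let V be a finite type and A : Matrix V V ℕ. Then the following are equivalent: (1) there exists n ≥ 1 such that every entry of A^n is positive; (2) for all v, w ∈ V there exists m ≥ 1 with (A^m) v w > 0, and every vertex v has period 1, i.e. any natural number dividing every element of S(v) = {m ≥ 1 : (A^m) v v > 0} divides 1. -/

import Mathlib

private lemma apow_chain {V : Type*} [Fintype V] [DecidableEq V] (A : Matrix V V ℕ)
    {a b : ℕ} {v u w : V} (h1 : 0 < (A ^ a) v u) (h2 : 0 < (A ^ b) u w) :
    0 < (A ^ (a + b)) v w := by
  rw [pow_add, Matrix.mul_apply]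
  exact Finset.sum_pos' (fun i _ => Nat.zero_le _)
    ⟨u, Finset.mem_univ u, Nat.mul_pos h1 h2⟩

/-- From the gcd-one hypothesis, find consecutive elements of the additive closure. -/
private lemma key_exists (S : Set ℕ) (hdvd : ∀ k : ℕ, (∀ m ∈ S, k ∣ m) → k ∣ 1) :
    ∃ y : ℕ, y ∈ AddSubmonoid.closure S ∧ y + 1 ∈ AddSubmonoid.closure S := by
  set H : AddSubgroup ℤ := AddSubgroup.closure ((fun n : ℕ => (n : ℤ)) '' S) with hH
  obtain ⟨g, hg⟩ := Int.subgroup_cyclic H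
  have hgdvd : ∀ m ∈ S, g ∣ (m : ℤ) := by
    intro m hm
    have : (m : ℤ) ∈ H := AddSubgroup.subset_closure ⟨m, hm, rfl⟩
    rw [hg, AddSubgroup.mem_closure_singleton] at this
    obtain ⟨n, hn⟩ := this
    exact ⟨n, by rw [← hn, zsmul_eq_mul, mul_comm]; norm_cast⟩
  have hna : g.natAbs ∣ 1 := by
    apply hdvd
    intro m hm
    have := Int.natAbs_dvd_natAbs.mpr (hgdvd m hm)
    simpa using this
  have h1H : (1 : ℤ) ∈ H := by
    have hna1 : g.natAbs = 1 := Nat.dvd_one.mp hna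
    have hg1 : g = 1 ∨ g = -1 := by omega
    have hgmem : g ∈ H := hg ▸ AddSubgroup.mem_closure_singleton.mpr ⟨1, by simp⟩
    rcases hg1 with h | h
    · exact h ▸ hgmem
    · have := neg_mem hgmem
      rw [h] at this
      simpa using this
  have key : ∀ z ∈ H, ∃ x y : ℕ, x ∈ AddSubmonoid.closure S ∧ y ∈ AddSubmonoid.closure S ∧
      (x : ℤ) - y = z := by
    intro z hz
    rw [hH] at hz
    induction hz using AddSubgroup.closure_induction with
    | mem x hx =>
      obtain ⟨m, hm, rfl⟩ := hx
      exact ⟨m, 0, AddSubmonoid.subset_closure hm, zero_mem _, by simp⟩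
    | zero => exact ⟨0, 0, zero_mem _, zero_mem _, by simp⟩
    | add a b ha hb iha ihb =>
      obtain ⟨x1, y1, hx1, hy1, he1⟩ := iha
      obtain ⟨x2, y2, hx2, hy2, he2⟩ := ihb
      exact ⟨x1 + x2, y1 + y2, add_mem hx1 hx2, add_mem hy1 hy2, by push_cast; omega⟩
    | neg a ha iha =>
      obtain ⟨x1, y1, hx1, hy1, he1⟩ := iha
      exact ⟨y1, x1, hy1, hx1, by omega⟩
  obtain ⟨x, y, hx, hy, hxy⟩ := key 1 h1H
  have : x = y + 1 := by omega
  exact ⟨y, hy, this ▸ hx⟩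

/-- Chicken McNugget style: an additively closed set containing 0, y and y+1 contains
all n ≥ y*y. -/
private lemma mcnugget (T : ℕ → Prop) (h0 : T 0) (hadd : ∀ a b, T a → T b → T (a + b))
    {y : ℕ} (hy : T y) (hx : T (y + 1)) : ∀ n, y * y ≤ n → T n := by
  have hmul : ∀ a, T a → ∀ k, T (k * a) := by
    intro a ha k
    induction k with
    | zero => simpa using h0
    | succ k ih => have := hadd _ _ ih ha; simpa [Nat.succ_mul] using this
  intro n hn
  rcases Nat.eq_zero_or_pos y with hy0 | hy0
  · subst hy0
    simp at hx
    induction n with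
    | zero => exact h0
    | succ n ih => exact hadd n 1 (ih (by omega)) hx
  · set q := n / y with hq
    set r := n % y with hr
    have hrq : r < y := Nat.mod_lt _ hy0
    have hqy : y ≤ q := by
      rw [hq, Nat.le_div_iff_mul_le hy0]
      exact hn
    have hdm : q * y + r = n := by
      rw [hq, hr, Nat.mul_comm]
      exact Nat.div_add_mod n y
    have hrle : r ≤ q := le_of_lt (lt_of_lt_of_le hrq hqy)
    have heq : (q - r) * y + r * (y + 1) = n := by
      have : (q - r) * y + r * y = q * y := by
        rw [← Nat.add_mul, Nat.sub_add_cancel hrle]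
      calc (q - r) * y + r * (y + 1) = ((q - r) * y + r * y) + r := by ring
        _ = q * y + r := by rw [this]
        _ = n := hdm
    exact heq ▸ hadd _ _ (hmul y hy (q - r)) (hmul (y + 1) hx r)

theorem n_connected_iff_strongly_connected_period_one (V : Type*) [Fintype V]
    [DecidableEq V] (A : Matrix V V ℕ) :
    (∃ n : ℕ, 1 ≤ n ∧ ∀ v w : V, 0 < (A ^ n) v w) ↔
      ((∀ v w : V, ∃ m : ℕ, 1 ≤ m ∧ 0 < (A ^ m) v w) ∧
        ∀ v : V, ∀ k : ℕ, (∀ m : ℕ, 1 ≤ m → 0 < (A ^ m) v v → k ∣ m) → k ∣ 1) := by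
  classical
  constructor
  · rintro ⟨n, hn1, hpos⟩
    refine ⟨fun v w => ⟨n, hn1, hpos v w⟩, ?_⟩
    intro v k hk
    -- find u with A v u > 0
    obtain ⟨u, hu⟩ : ∃ u, 0 < A v u := by
      by_contra hc
      push_neg at hc
      have hz : ∀ u, A v u = 0 := fun u => Nat.le_zero.mp (hc u)
      have h := hpos v v
      rw [show n = 1 + (n - 1) by omega, pow_add, Matrix.mul_apply] at h
      simp [pow_one, hz] at h
    have hn1' : 0 < (A ^ (1 + n)) v v := by
      have : 0 < (A ^ 1) v u := by simpa using hu
      exact apow_chain A this (hpos u v)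
    have d1 := hk n hn1 (hpos v v)
    have d2 := hk (1 + n) (by omega) hn1'
    have := Nat.dvd_sub d2 d1
    simpa using this
  · rintro ⟨hconn, hper⟩
    choose m hm1 hm2 using hconn
    -- for each v, the diagonal positivity predicate
    set T : V → ℕ → Prop := fun v n => 0 < (A ^ n) v v with hT
    have hT0 : ∀ v, T v 0 := by intro v; simp [hT, Matrix.one_apply_eq]
    have hTadd : ∀ v a b, T v a → T v b → T v (a + b) := fun v a b ha hb => apow_chain A ha hb
    -- consecutive elements
    have hcons : ∀ v : V, ∃ y : ℕ, T v y ∧ T v (y + 1) := by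
      intro v
      obtain ⟨y, hy, hy1⟩ := key_exists {n | 1 ≤ n ∧ 0 < (A ^ n) v v}
        (fun k hk => hper v k (fun mm h1 h2 => hk mm ⟨h1, h2⟩))
      have hsub : AddSubmonoid.closure {n | 1 ≤ n ∧ 0 < (A ^ n) v v} ≤
          { carrier := {n | T v n}
            zero_mem' := hT0 v
            add_mem' := fun {a b} ha hb => hTadd v a b ha hb } := by
        apply AddSubmonoid.closure_le.mpr
        intro n hn
        exact hn.2
      exact ⟨y, hsub hy, hsub hy1⟩
    choose y hy1 hy2 using hcons
    have hbig : ∀ v n, y v * y v ≤ n → 0 < (A ^ n) v v := fun v =>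
      mcnugget (T v) (hT0 v) (hTadd v) (hy1 v) (hy2 v)
    set N : ℕ := Finset.univ.sup (fun v : V => y v * y v) with hN
    set M : ℕ := Finset.univ.sup (fun p : V × V => m p.1 p.2) with hM
    refine ⟨N + M + 1, by omega, ?_⟩
    intro v w
    have hmle : m v w ≤ M := Finset.le_sup (f := fun p : V × V => m p.1 p.2)
      (Finset.mem_univ (v, w))
    have hNle : y v * y v ≤ N := Finset.le_sup (f := fun v : V => y v * y v)
      (Finset.mem_univ v)
    have hdiag : 0 < (A ^ (N + M + 1 - m v w)) v v := hbig v _ (by omega)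
    have := apow_chain A hdiag (hm2 v w)
    rwa [show N + M + 1 - m v w + m v w = N + M + 1 by omega] at this
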